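/- Filter-then-verify is exact when the filter relation is contained in the user relation: if ≻_U ⊆ ≻_c, ≻_c is a strict partial order, and O is finite, then {o ∈ P_U | ¬∃o' ∈ P_U, o' ≻_c o} = P_c, where P_U and P_c are the Pareto frontiers of O under ≻_U and ≻_c respectively. -/
import Mathlib


theorem stmt_19 {α : Type*} (O : Set α) (hfin : O.Finite)
    (rU rc : α → α → Prop)
    (hsub : ∀ x y, rU x y → rc x y)
    (hirr : ∀ x, ¬ rc x x)
    (htr : ∀ x y z, rc x y → rc y z → rc x z) :
    {o ∈ {o ∈ O | ¬ ∃ o' ∈ O, rU o' o} |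
      ¬ ∃ o' ∈ {o ∈ O | ¬ ∃ o'' ∈ O, rU o'' o}, rc o' o} =
    {o ∈ O | ¬ ∃ o' ∈ O, rc o' o} := by
  have hwf : O.WellFoundedOn rc := by
    have : IsIrrefl α rc := ⟨hirr⟩
    have : IsTrans α rc := ⟨htr⟩
    have : IsStrictOrder α rc := {}
    exact hfin.wellFoundedOn
  have key : ∀ o ∈ O, ∃ a ∈ O, (¬ ∃ o'' ∈ O, rU o'' a) ∧ (a = o ∨ rc a o) := by
    intro o ho
    refine hwf.induction (P := fun o => ∃ a ∈ O, (¬ ∃ o'' ∈ O, rU o'' a) ∧ (a = o ∨ rc a o)) ho ?_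
    intro x hx ih
    by_cases h : ∃ o'' ∈ O, rU o'' x
    · obtain ⟨b, hb, hbx⟩ := h
      have hrcbx : rc b x := hsub _ _ hbx
      obtain ⟨a, ha, hamax, hcase⟩ := ih b hb hrcbx
      refine ⟨a, ha, hamax, Or.inr ?_⟩
      rcases hcase with rfl | h'
      · exact hrcbx
      · exact htr _ _ _ h' hrcbx
    · exact ⟨x, hx, h, Or.inl rfl⟩
  ext o
  simp only [Set.mem_setOf_eq, Set.mem_sep_iff]
  constructor
  · rintro ⟨⟨hoO, hU⟩, hV⟩
    refine ⟨hoO, ?_⟩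
    rintro ⟨o', ho', hrc⟩
    obtain ⟨a, ha, hamax, hcase⟩ := key o' ho'
    refine hV ⟨a, ⟨ha, hamax⟩, ?_⟩
    rcases hcase with rfl | h'
    · exact hrc
    · exact htr _ _ _ h' hrc
  · rintro ⟨hoO, hc⟩
    refine ⟨⟨hoO, fun ⟨o', ho', h⟩ => hc ⟨o', ho', hsub _ _ h⟩⟩, ?_⟩
    rintro ⟨o', ⟨ho', _⟩, hrc⟩
    exact hc ⟨o', ho', hrc⟩
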